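/- Let {W_i}_{i=1}^N be a tight fusion frame for ℝ^M with bound A, i.e. Σ_{i=1}^N P_i = A·I, in which every subspace has dimension m. Then A = Nm/M, and for every j ∈ {1,…,N}, A = N − (1/m) Σ_{i≠j} d_c(W_i, W_j)²; equivalently, Σ_{i≠j} d_c(W_i,W_j)² = m·N·(M−m)/M for every j. -/

import Mathlib

open Matrix BigOperators

/-- The Frobenius norm of a real square matrix. -/
noncomputable def frobeniusNorm {M : ℕ} (X : Matrix (Fin M) (Fin M) ℝ) : ℝ :=
  Real.sqrt (Matrix.trace (Xᵀ * X))

/-- The chordal distance between two subspaces of `ℝ^M`, expressed in terms of their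
orthogonal projection matrices: `d_c = (1/√2) ‖Q_V − Q_W‖_F`. -/
noncomputable def chordalDist {M : ℕ} (Q₁ Q₂ : Matrix (Fin M) (Fin M) ℝ) : ℝ :=
  (1 / Real.sqrt 2) * frobeniusNorm (Q₁ - Q₂)

lemma trace_idem {M : ℕ} (Q : Matrix (Fin M) (Fin M) ℝ) (h : Q * Q = Q) :
    Matrix.trace Q = (Module.finrank ℝ (LinearMap.range Q.mulVecLin) : ℝ) := by
  set f := Q.mulVecLin with hf
  have hff : f ∘ₗ f = f := by rw [hf, ← Matrix.mulVecLin_mul, h]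
  have hproj : LinearMap.IsProj (LinearMap.range f) f := by
    refine ⟨fun x => LinearMap.mem_range_self f x, ?_⟩
    rintro x ⟨y, rfl⟩
    exact congrFun (congrArg (fun g => g.toFun) hff) y
  have := hproj.trace
  rw [LinearMap.trace_eq_matrix_trace ℝ (Pi.basisFun ℝ (Fin M)),
    LinearMap.toMatrix_eq_toMatrix'] at this
  rw [← this, hf, ← Matrix.toLin'_apply', LinearMap.toMatrix'_toLin']

lemma trace_transpose_mul_nonneg {M : ℕ} (X : Matrix (Fin M) (Fin M) ℝ) :
    0 ≤ Matrix.trace (Xᵀ * X) := by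
  rw [Matrix.trace]
  refine Finset.sum_nonneg fun j _ => ?_
  simp only [Matrix.diag_apply, Matrix.mul_apply, Matrix.transpose_apply]
  exact Finset.sum_nonneg fun i _ => mul_self_nonneg _

lemma chordal_sq {M : ℕ} (Q₁ Q₂ : Matrix (Fin M) (Fin M) ℝ)
    (h₁ : Q₁.IsSymm) (h₂ : Q₂.IsSymm) (e₁ : Q₁ * Q₁ = Q₁) (e₂ : Q₂ * Q₂ = Q₂) :
    chordalDist Q₁ Q₂ ^ 2 =
      Matrix.trace Q₁ / 2 + Matrix.trace Q₂ / 2 - Matrix.trace (Q₁ * Q₂) := by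
  have h2 : (0:ℝ) < 2 := by norm_num
  have hs : Real.sqrt 2 ^ 2 = 2 := Real.sq_sqrt h2.le
  have hf : frobeniusNorm (Q₁ - Q₂) ^ 2 = Matrix.trace ((Q₁ - Q₂)ᵀ * (Q₁ - Q₂)) :=
    Real.sq_sqrt (trace_transpose_mul_nonneg _)
  have hT : (Q₁ - Q₂)ᵀ = Q₁ - Q₂ := by
    rw [Matrix.transpose_sub, h₁.eq, h₂.eq]
  have hcomm : Matrix.trace (Q₂ * Q₁) = Matrix.trace (Q₁ * Q₂) := Matrix.trace_mul_comm _ _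
  rw [chordalDist, mul_pow, hf, hT, sub_mul, mul_sub, mul_sub, e₁, e₂]
  rw [Matrix.trace_sub, Matrix.trace_sub, Matrix.trace_sub, hcomm]
  field_simp
  rw [hs]; ring


/-- A tight fusion frame `{W i}` for `ℝ^M` with bound `A`
(`∑ᵢ Pᵢ = A • I`) consisting of `m`-dimensional subspaces satisfies `A = Nm/M` and,
for every `j`, `A = N − (1/m) ∑_{i≠j} d_c(Wᵢ, Wⱼ)²`; equivalently
`∑_{i≠j} d_c(Wᵢ, Wⱼ)² = m N (M−m)/M` for every `j`. -/
theorem tight_fusion_frame_bound_and_distance_sums {M N : ℕ} (hM : 0 < M)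
    (A : ℝ) (hA : 0 < A)
    (W : Fin N → Submodule ℝ (Fin M → ℝ))
    (P : Fin N → Matrix (Fin M) (Fin M) ℝ)
    (hP : ∀ i, (P i).IsSymm ∧ P i * P i = P i ∧
      LinearMap.range (P i).mulVecLin = W i)
    (htight : ∑ i, P i = A • (1 : Matrix (Fin M) (Fin M) ℝ))
    (m : ℕ) (hdim : ∀ i, Module.finrank ℝ (W i) = m) :
    A = (N : ℝ) * (m : ℝ) / (M : ℝ) ∧
    (∀ j, A = (N : ℝ) -
      (1 / (m : ℝ)) * ∑ i ∈ Finset.univ.erase j, chordalDist (P i) (P j) ^ 2) ∧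
    (∀ j, ∑ i ∈ Finset.univ.erase j, chordalDist (P i) (P j) ^ 2 =
      (m : ℝ) * (N : ℝ) * ((M : ℝ) - (m : ℝ)) / (M : ℝ)) := by
  have htr : ∀ i, Matrix.trace (P i) = (m : ℝ) := by
    intro i
    rw [trace_idem (P i) (hP i).2.1, (hP i).2.2, hdim i]
  have hMne : (M:ℝ) ≠ 0 := Nat.cast_ne_zero.mpr hM.ne'
  -- trace of the tightness relation
  have htrace : (N:ℝ) * (m:ℝ) = A * (M:ℝ) := by
    have := congrArg Matrix.trace htight
    rw [Matrix.trace_sum, Matrix.trace_smul, Matrix.trace_one] at this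
    simp only [htr, Finset.sum_const, Finset.card_univ, Fintype.card_fin,
      nsmul_eq_mul, smul_eq_mul] at this
    simpa [Fintype.card_fin] using this
  have hAval : A = (N:ℝ) * (m:ℝ) / (M:ℝ) := by
    field_simp
    linarith [htrace]
  have hNm : (0:ℝ) < (N:ℝ) * (m:ℝ) := by
    rw [htrace]; exact mul_pos hA (Nat.cast_pos.mpr hM)
  have hmpos : (0:ℝ) < (m:ℝ) := by
    nlinarith [hNm, Nat.cast_nonneg (α := ℝ) N, Nat.cast_nonneg (α := ℝ) m]
  -- key sum for each j
  have hsum : ∀ j, ∑ i ∈ Finset.univ.erase j, chordalDist (P i) (P j) ^ 2 =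
      (N:ℝ) * (m:ℝ) - A * (m:ℝ) := by
    intro j
    have hmul : ∑ i, Matrix.trace (P i * P j) = A * (m:ℝ) := by
      have := congrArg (fun X => Matrix.trace (X * P j)) htight
      simp only [Finset.sum_mul, Matrix.trace_sum, Matrix.smul_mul, one_mul,
        Matrix.trace_smul, smul_eq_mul] at this
      rw [this, htr j]
    have herase : ∑ i ∈ Finset.univ.erase j, Matrix.trace (P i * P j)
        = A * (m:ℝ) - (m:ℝ) := by
      have h1 : (∑ i ∈ Finset.univ.erase j, Matrix.trace (P i * P j))
          + Matrix.trace (P j * P j) = A * (m:ℝ) := by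
        rw [Finset.sum_erase_add Finset.univ _ (Finset.mem_univ j)]; exact hmul
      rw [(hP j).2.1, htr j] at h1
      linarith
    have hc : ∀ i, chordalDist (P i) (P j) ^ 2 = (m:ℝ) - Matrix.trace (P i * P j) := by
      intro i
      rw [chordal_sq (P i) (P j) (hP i).1 (hP j).1 (hP i).2.1 (hP j).2.1, htr i, htr j]
      ring
    rw [Finset.sum_congr rfl fun i _ => hc i, Finset.sum_sub_distrib, herase,
      Finset.sum_const, Finset.card_erase_of_mem (Finset.mem_univ j),
      Finset.card_univ, Fintype.card_fin, nsmul_eq_mul]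
    have hN : 1 ≤ N := by
      by_contra h
      push_neg at h
      interval_cases N
      simp at hNm
    rw [Nat.cast_sub hN]
    push_cast
    ring
  refine ⟨hAval, fun j => ?_, fun j => ?_⟩
  · rw [hsum j]
    field_simp
    ring
  · rw [hsum j, hAval]
    field_simp
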